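/- ω rule correctness: let Q : Z_2^n × Z_2^m → Z_2 be a Boolean-valued function and R : Z_2^n × Z_2^m → D. Then the linear operator |x⟩ ↦ (1/√(2^{m+1})) ∑_{y_0∈Z_2} ∑_{y∈Z_2^m} e^{2πi(y_0/4 + y_0·Q(x,y)/2 + R(x,y))} |f(x,y)⟩ equals the operator |x⟩ ↦ (1/√(2^m)) ∑_{y∈Z_2^m} e^{2πi(1/8 + 3·Q(x,y)/4 + R(x,y))} |f(x,y)⟩. Concretely this follows from the scalar identity 1 + i·(-1)^q = √2 · e^{2πi(1/8 + 3q/4)} for q ∈ {0,1}. -/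

import Mathlib

open scoped BigOperators

/-- The computational basis state `|z⟩` in the `2^n`-dimensional Hilbert space. -/
noncomputable def ket {n : ℕ} (z : Fin n → ZMod 2) : (Fin n → ZMod 2) → ℂ :=
  fun w => if w = z then 1 else 0

/-- The phase `e^{2πi t}` for a (dyadic) rational `t`. -/
noncomputable def ph (t : ℚ) : ℂ := Complex.exp (2 * (Real.pi : ℂ) * Complex.I * (t : ℂ))

/-- ω rule correctness.  For Boolean-valued `Q` and dyadic-valued `R`,
`(1/√(2^(m+1))) ∑_{y₀}∑_y e^{2πi(y₀/4 + y₀Q(x,y)/2 + R(x,y))}|f(x,y)⟩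
  = (1/√(2^m)) ∑_y e^{2πi(1/8 + 3Q(x,y)/4 + R(x,y))}|f(x,y)⟩`. -/
lemma ph_add (a b : ℚ) : ph (a + b) = ph a * ph b := by
  unfold ph
  rw [← Complex.exp_add]
  congr 1
  push_cast
  ring

lemma ph_quarter : ph (1/4) = Complex.I := by
  unfold ph
  have : 2 * (Real.pi : ℂ) * Complex.I * ((1/4 : ℚ) : ℂ) = (Real.pi/2 : ℝ) * Complex.I := by
    push_cast; ring
  rw [this, Complex.exp_mul_I, ← Complex.ofReal_cos, ← Complex.ofReal_sin,
    Real.cos_pi_div_two, Real.sin_pi_div_two]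
  simp

lemma ph_half : ph (1/2) = -1 := by
  unfold ph
  have : 2 * (Real.pi : ℂ) * Complex.I * ((1/2 : ℚ) : ℂ) = (Real.pi : ℂ) * Complex.I := by
    push_cast; ring
  rw [this, Complex.exp_pi_mul_I]

lemma ph_eighth : ph (1/8) = (1 + Complex.I) / (Real.sqrt 2 : ℝ) := by
  unfold ph
  have : 2 * (Real.pi : ℂ) * Complex.I * ((1/8 : ℚ) : ℂ) = (Real.pi/4 : ℝ) * Complex.I := by
    push_cast; ring
  rw [this, Complex.exp_mul_I, ← Complex.ofReal_cos, ← Complex.ofReal_sin,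
    Real.cos_pi_div_four, Real.sin_pi_div_four]
  have h2 : (Real.sqrt 2 : ℂ) ≠ 0 := by
    simpa using Real.sqrt_ne_zero'.mpr (by norm_num)
  have hs : (Real.sqrt 2 : ℂ) * (Real.sqrt 2 : ℂ) = 2 := by
    norm_cast
    exact Real.mul_self_sqrt (by norm_num)
  field_simp
  push_cast
  linear_combination (1 + Complex.I) / 2 * hs

lemma key (q : ℚ) (hq : q = 0 ∨ q = 1) :
    1 + ph (1/4 + q/2) = (Real.sqrt 2 : ℝ) * ph (1/8 + 3*q/4) := by
  have h2 : (Real.sqrt 2 : ℂ) ≠ 0 := by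
    simpa using Real.sqrt_ne_zero'.mpr (by norm_num)
  have hs : (Real.sqrt 2 : ℂ) * (Real.sqrt 2 : ℂ) = 2 := by
    norm_cast
    exact Real.mul_self_sqrt (by norm_num)
  rcases hq with h | h <;> subst h
  · norm_num [ph_quarter, ph_eighth]
    field_simp
  · rw [ph_add, show (1/8 + 3*(1:ℚ)/4) = 1/8 + (1/4 + 1/2) from by norm_num,
      ph_add, ph_add, ph_quarter, ph_half, ph_eighth]
    field_simp
    linear_combination Complex.I_sq

lemma zmod_sum {V : Type*} [AddCommMonoid V] (g : ZMod 2 → V) :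
    ∑ y0 : ZMod 2, g y0 = g 0 + g 1 := by
  exact Fin.sum_univ_two g

theorem stmt5 (n m : ℕ)
    (Q : (Fin n → ZMod 2) → (Fin m → ZMod 2) → ZMod 2)
    (R : (Fin n → ZMod 2) → (Fin m → ZMod 2) → ℚ)
    (f : (Fin n → ZMod 2) → (Fin m → ZMod 2) → (Fin n → ZMod 2)) :
    ∀ x : Fin n → ZMod 2,
      (((Real.sqrt (2 ^ (m + 1)))⁻¹ : ℝ) : ℂ) •
          ∑ y0 : ZMod 2, ∑ y : Fin m → ZMod 2,
            ph ((y0.val : ℚ) / 4 + (y0.val : ℚ) * ((Q x y).val : ℚ) / 2 + R x y) •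
              ket (f x y)
        = (((Real.sqrt (2 ^ m))⁻¹ : ℝ) : ℂ) •
          ∑ y : Fin m → ZMod 2,
            ph ((1 : ℚ) / 8 + 3 * ((Q x y).val : ℚ) / 4 + R x y) • ket (f x y) := by
  intro x
  rw [zmod_sum, ← Finset.sum_add_distrib, Finset.smul_sum, Finset.smul_sum]
  apply Finset.sum_congr rfl
  intro y _
  set q : ℚ := ((Q x y).val : ℚ) with hqdef
  have hq : q = 0 ∨ q = 1 := by
    have := ZMod.val_lt (Q x y)
    interval_cases h : (Q x y).val <;> simp [hqdef, h]
  rw [ZMod.val_zero, ZMod.val_one, Nat.cast_zero, Nat.cast_one]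
  rw [show ((0:ℚ)/4 + 0 * q / 2 + R x y) = R x y by ring,
      show ((1:ℚ)/4 + 1 * q / 2 + R x y) = (1/4 + q/2) + R x y by ring,
      ph_add (1/4 + q/2) (R x y), ph_add (1/8 + 3*q/4) (R x y)]
  rw [smul_add, smul_smul, smul_smul, smul_smul, ← add_smul]
  congr 1
  have h2 : (Real.sqrt 2 : ℝ) ≠ 0 := Real.sqrt_ne_zero'.mpr (by norm_num)
  have hm : (Real.sqrt (2 ^ m) : ℝ) ≠ 0 := Real.sqrt_ne_zero'.mpr (by positivity)
  have hc : (((Real.sqrt (2 ^ (m+1)))⁻¹ : ℝ) : ℂ) * (Real.sqrt 2 : ℝ)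
      = (((Real.sqrt (2 ^ m))⁻¹ : ℝ) : ℂ) := by
    have : (Real.sqrt (2 ^ (m+1)))⁻¹ * Real.sqrt 2 = (Real.sqrt (2 ^ m))⁻¹ := by
      rw [pow_succ, Real.sqrt_mul (by positivity)]
      field_simp
    rw [← this]
    push_cast
    ring
  have hkey := key q hq
  linear_combination ((((Real.sqrt (2 ^ (m+1)))⁻¹ : ℝ) : ℂ) * ph (R x y)) * hkey
    + (ph (1/8 + 3*q/4) * ph (R x y)) * hc
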